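/- Let P be a poset on [n], 𝔽_q a finite field, χ a nontrivial additive character of 𝔽_q, I, J order ideals of P, and u ∈ S_I. Then Σ_{v ∈ S_{J^c}} χ(u·v) = (−1)^{|I ∩ J^c|} (q−1)^{|M(J^c)| − |I ∩ J^c|} q^{|(J^c)_M|} if I_M ∩ J^c = ∅, and Σ_{v ∈ S_{J^c}} χ(u·v) = 0 if I_M ∩ J^c ≠ ∅. (Lemma 3.7.) -/

import Mathlib

open scoped BigOperators
open Finset

noncomputable section
open scoped Classical

/-- `I ⊆ [n]` is an order ideal with respect to the order relation `le`. -/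
def IsIdeal {n : ℕ} (le : Fin n → Fin n → Prop) (I : Finset (Fin n)) : Prop :=
  ∀ a ∈ I, ∀ b, le b a → b ∈ I

/-- `⟨X⟩_P` : the smallest order ideal (w.r.t. `le`) containing `X`. -/
def idealCl {n : ℕ} (le : Fin n → Fin n → Prop) (X : Finset (Fin n)) : Finset (Fin n) :=
  Finset.univ.filter fun b => ∃ a ∈ X, le b a

/-- `M(A)` : the set of maximal elements of `A` with respect to `le`. -/
def maxSet {n : ℕ} (le : Fin n → Fin n → Prop) (A : Finset (Fin n)) : Finset (Fin n) :=
  A.filter fun a => ∀ b ∈ A, le a b → b = a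

/-- `E` is an equivalence relation on the set of order ideals of the poset `le`. -/
def EqvOnIdeals {n : ℕ} (le : Fin n → Fin n → Prop)
    (E : Finset (Fin n) → Finset (Fin n) → Prop) : Prop :=
  (∀ I J, E I J → IsIdeal le I ∧ IsIdeal le J) ∧
  (∀ I, IsIdeal le I → E I I) ∧
  (∀ I J, E I J → E J I) ∧
  (∀ I J K, E I J → E J K → E I K)

/-- support of a vector -/
def supp {n : ℕ} {F : Type} [Field F] [Fintype F] (v : Fin n → F) : Finset (Fin n) :=
  Finset.univ.filter fun i => v i ≠ 0

/-- standard dot product -/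
def dot {n : ℕ} {F : Type} [Field F] [Fintype F] (u v : Fin n → F) : F := ∑ i, u i * v i

/-- the sphere `S_I = {v : ⟨supp v⟩_P = I}` -/
def sph {n : ℕ} (F : Type) [Field F] [Fintype F] (le : Fin n → Fin n → Prop)
    (I : Finset (Fin n)) : Finset (Fin n → F) :=
  Finset.univ.filter fun v => idealCl le (supp v) = I

/-- the dual sphere `S_{J^c} = {v : ⟨supp v⟩_{P*} = J^c}` -/
def sphD {n : ℕ} (F : Type) [Field F] [Fintype F] (le : Fin n → Fin n → Prop)
    (J : Finset (Fin n)) : Finset (Fin n → F) :=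
  Finset.univ.filter fun v => idealCl (fun a b => le b a) (supp v) = Jᶜ

/-- the `E`-sphere `S_{Ī,E} = {v : (⟨supp v⟩_P, I) ∈ E}` -/
def sphE {n : ℕ} (F : Type) [Field F] [Fintype F] (le : Fin n → Fin n → Prop)
    (E : Finset (Fin n) → Finset (Fin n) → Prop) (I : Finset (Fin n)) :
    Finset (Fin n → F) :=
  Finset.univ.filter fun v => E (idealCl le (supp v)) I

/-- the `E*`-sphere `S_{J̄^c,E*} = {v : ⟨supp v⟩_{P*} = K^c for some ideal K with (K,J) ∈ E}` -/
def sphED {n : ℕ} (F : Type) [Field F] [Fintype F] (le : Fin n → Fin n → Prop)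
    (E : Finset (Fin n) → Finset (Fin n) → Prop) (J : Finset (Fin n)) :
    Finset (Fin n → F) :=
  Finset.univ.filter fun v =>
    ∃ K, IsIdeal le K ∧ E K J ∧ idealCl (fun a b => le b a) (supp v) = Kᶜ

/-- the dual code `C^⊥` -/
def dualCode {n : ℕ} {F : Type} [Field F] [Fintype F] (C : Submodule F (Fin n → F)) :
    Submodule F (Fin n → F) where
  carrier := {u | ∀ v ∈ C, dot u v = 0}
  zero_mem' := by intro v hv; simp [dot]
  add_mem' := by
    intro a b ha hb v hv
    have h1 := ha v hv
    have h2 := hb v hv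
    simp only [dot, Pi.add_apply] at *
    simp [add_mul, Finset.sum_add_distrib, h1, h2]
  smul_mem' := by
    intro c a ha v hv
    have h1 := ha v hv
    simp only [dot, Pi.smul_apply, smul_eq_mul] at *
    simp [mul_assoc, ← Finset.mul_sum, h1]

/-- `A_{Ī,E}(C) = |C ∩ S_{Ī,E}|` -/
def AE {n : ℕ} {F : Type} [Field F] [Fintype F] (le : Fin n → Fin n → Prop)
    (E : Finset (Fin n) → Finset (Fin n) → Prop)
    (C : Submodule F (Fin n → F)) (I : Finset (Fin n)) : ℕ :=
  ((sphE F le E I).filter fun v => v ∈ C).card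

/-- `A_{J̄^c,E*}(D) = |D ∩ S_{J̄^c,E*}|` -/
def AED {n : ℕ} {F : Type} [Field F] [Fintype F] (le : Fin n → Fin n → Prop)
    (E : Finset (Fin n) → Finset (Fin n) → Prop)
    (D : Submodule F (Fin n → F)) (J : Finset (Fin n)) : ℕ :=
  ((sphED F le E J).filter fun v => v ∈ D).card

/-- `E` is a MacWilliams-type equivalence relation (w.r.t. the field `F`). -/
def IsMacWilliamsType {n : ℕ} (F : Type) [Field F] [Fintype F]
    (le : Fin n → Fin n → Prop) (E : Finset (Fin n) → Finset (Fin n) → Prop) : Prop :=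
  ∀ C₁ C₂ : Submodule F (Fin n → F),
    (∀ I, IsIdeal le I → AE le E C₁ I = AE le E C₂ I) →
    ∀ J, IsIdeal le J → AED le E (dualCode C₁) J = AED le E (dualCode C₂) J

/-- a hierarchical poset (ordinal sum of antichains) -/
def IsHierarchical {n : ℕ} (le : Fin n → Fin n → Prop) : Prop :=
  ∃ l : Fin n → ℕ, ∀ i j, (le i j ∧ i ≠ j) ↔ l i < l j

/-- `σ` is an automorphism of the poset `le`. -/
def IsAut {n : ℕ} (le : Fin n → Fin n → Prop) (σ : Equiv.Perm (Fin n)) : Prop :=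
  ∀ x y, le x y ↔ le (σ x) (σ y)

/-- `A` and `B` are order-isomorphic with the induced orders. -/
def OrdIso {n : ℕ} (le : Fin n → Fin n → Prop) (A B : Finset (Fin n)) : Prop :=
  ∃ e : {x // x ∈ A} ≃ {x // x ∈ B}, ∀ a b : {x // x ∈ A}, le ↑a ↑b ↔ le ↑(e a) ↑(e b)


section Aux37

variable {n : ℕ}

lemma mem_supp_iff' {F : Type} [Field F] [Fintype F] (v : Fin n → F) (i : Fin n) :
    i ∈ supp v ↔ v i ≠ 0 := by simp [supp]

lemma subset_idealCl' (le : Fin n → Fin n → Prop) [IsPartialOrder (Fin n) le]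
    (X : Finset (Fin n)) : X ⊆ idealCl le X := by
  intro a ha
  simp only [idealCl, Finset.mem_filter, Finset.mem_univ, true_and]
  exact ⟨a, ha, Std.Refl.refl a⟩

lemma exists_min_below (le : Fin n → Fin n → Prop) [IsPartialOrder (Fin n) le]
    (A : Finset (Fin n)) (b : Fin n) (hb : b ∈ A) :
    ∃ a ∈ maxSet (fun a b => le b a) A, le a b := by
  have H : ∀ k (b : Fin n), b ∈ A → (A.filter fun c => le c b).card ≤ k →
      ∃ a ∈ maxSet (fun a b => le b a) A, le a b := by
    intro k
    induction k with
    | zero =>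
      intro b hb hcard
      have hbmem : b ∈ A.filter fun c => le c b :=
        Finset.mem_filter.2 ⟨hb, Std.Refl.refl b⟩
      have := Finset.card_pos.2 ⟨b, hbmem⟩
      omega
    | succ k ih =>
      intro b hb hcard
      by_cases hmin : ∀ c ∈ A, le c b → c = b
      · refine ⟨b, ?_, Std.Refl.refl b⟩
        simpa [maxSet, hb] using hmin
      · push_neg at hmin
        obtain ⟨c, hcA, hcb, hne⟩ := hmin
        have hsub : (A.filter fun d => le d c) ⊆ (A.filter fun d => le d b) := by
          intro d hd
          rw [Finset.mem_filter] at hd ⊢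
          exact ⟨hd.1, IsTrans.trans _ _ _ hd.2 hcb⟩
        have hbnot : b ∉ A.filter fun d => le d c := by
          intro hbm
          rw [Finset.mem_filter] at hbm
          exact hne (Std.Antisymm.antisymm _ _ hcb hbm.2)
        have hlt : (A.filter fun d => le d c).card < (A.filter fun d => le d b).card :=
          Finset.card_lt_card ⟨hsub, fun hss => hbnot (hss (Finset.mem_filter.2 ⟨hb, Std.Refl.refl b⟩))⟩
        obtain ⟨a, ha, hac⟩ := ih c hcA (by omega)
        exact ⟨a, ha, IsTrans.trans _ _ _ hac hcb⟩
  exact H _ b hb le_rfl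

lemma mem_sphD_iff (F : Type) [Field F] [Fintype F] (le : Fin n → Fin n → Prop)
    [IsPartialOrder (Fin n) le] (J : Finset (Fin n)) (hJ : IsIdeal le J) (v : Fin n → F) :
    v ∈ sphD F le J ↔
      (∀ i, v i ≠ 0 → i ∈ Jᶜ) ∧ ∀ i ∈ maxSet (fun a b => le b a) Jᶜ, v i ≠ 0 := by
  haveI : IsPartialOrder (Fin n) (fun a b => le b a) :=
    { refl := fun a => Std.Refl.refl a
      trans := fun a b c h1 h2 => IsTrans.trans _ _ _ h2 h1
      antisymm := fun a b h1 h2 => Std.Antisymm.antisymm _ _ h2 h1 }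
  have hup : ∀ a ∈ Jᶜ, ∀ b, le a b → b ∈ Jᶜ := by
    intro a ha b hab
    rw [Finset.mem_compl] at ha ⊢
    exact fun hbJ => ha (hJ b hbJ a hab)
  constructor
  · intro hv
    have heq : idealCl (fun a b => le b a) (supp v) = Jᶜ := by
      simpa [sphD] using hv
    constructor
    · intro i hi
      rw [← heq]
      exact subset_idealCl' _ _ ((mem_supp_iff' v i).2 hi)
    · intro m hm
      have hmJc : m ∈ Jᶜ := Finset.mem_filter.1 hm |>.1
      have : m ∈ idealCl (fun a b => le b a) (supp v) := heq ▸ hmJc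
      simp only [idealCl, Finset.mem_filter, Finset.mem_univ, true_and] at this
      obtain ⟨a, hav, ham⟩ := this
      have haJc : a ∈ Jᶜ := by
        rw [← heq]; exact subset_idealCl' _ _ hav
      have : a = m := (Finset.mem_filter.1 hm).2 a haJc ham
      rw [← this]
      exact (mem_supp_iff' v a).1 hav
  · rintro ⟨h1, h2⟩
    simp only [sphD, Finset.mem_filter, Finset.mem_univ, true_and]
    apply Finset.Subset.antisymm
    · intro b hbmem
      simp only [idealCl, Finset.mem_filter, Finset.mem_univ, true_and] at hbmem
      obtain ⟨a, hav, hab⟩ := hbmem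
      exact hup a (h1 a ((mem_supp_iff' v a).1 hav)) b hab
    · intro b hb
      obtain ⟨a, haM, hab⟩ := exists_min_below le Jᶜ b hb
      simp only [idealCl, Finset.mem_filter, Finset.mem_univ, true_and]
      exact ⟨a, (mem_supp_iff' v a).2 (h2 a haM), hab⟩

lemma addChar_map_sum {F : Type} [Field F] [Fintype F] (χ : AddChar F ℂ)
    {ι : Type} (s : Finset ι) (f : ι → F) :
    χ (∑ i ∈ s, f i) = ∏ i ∈ s, χ (f i) := by
  classical
  induction s using Finset.induction with
  | empty => simp
  | insert _ _ h ih => rw [Finset.sum_insert h, Finset.prod_insert h, AddChar.map_add_eq_mul, ih]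

end Aux37

/-- Lemma 3.7: the character sum over the sphere `S_{J^c}`. -/
theorem stmt_10 {n : ℕ} (hn : 0 < n) (le : Fin n → Fin n → Prop)
    [IsPartialOrder (Fin n) le]
    (F : Type) [Field F] [Fintype F] (χ : AddChar F ℂ) (hχ : ∃ a, χ a ≠ 1)
    (I J : Finset (Fin n)) (hI : IsIdeal le I) (hJ : IsIdeal le J)
    (u : Fin n → F) (hu : u ∈ sph F le I) :
    ((I \ maxSet le I) ∩ Jᶜ = ∅ →
      ∑ v ∈ sphD F le J, χ (dot u v) =
        (-1 : ℂ) ^ (I ∩ Jᶜ).card *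
          ((Fintype.card F : ℂ) - 1) ^
            ((maxSet (fun a b => le b a) Jᶜ).card - (I ∩ Jᶜ).card) *
          (Fintype.card F : ℂ) ^ (Jᶜ \ maxSet (fun a b => le b a) Jᶜ).card) ∧
    ((I \ maxSet le I) ∩ Jᶜ ≠ ∅ →
      ∑ v ∈ sphD F le J, χ (dot u v) = 0) := by
  classical
  set M : Finset (Fin n) := maxSet (fun a b => le b a) Jᶜ with hM
  have hMsub : M ⊆ Jᶜ := Finset.filter_subset _ _
  set T : Fin n → Finset F := fun i =>
    if i ∈ M then ({0} : Finset F)ᶜ else if i ∈ Jᶜ then Finset.univ else {0} with hT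
  -- the sphere is a product set
  have hsphD : sphD F le J = Fintype.piFinset T := by
    ext v
    rw [mem_sphD_iff F le J hJ v, Fintype.mem_piFinset]
    constructor
    · rintro ⟨h1, h2⟩ i
      by_cases hiM : i ∈ M
      · simp [hT, hiM, h2 i hiM]
      · by_cases hiJ : i ∈ Jᶜ
        · have hiJ' : i ∉ J := Finset.mem_compl.1 hiJ
          simp [hT, hiM, hiJ']
        · simp only [hT, if_neg hiM, if_neg hiJ, Finset.mem_singleton]
          by_contra hvi
          exact hiJ (h1 i hvi)
    · intro h
      constructor
      · intro i hvi
        by_cases hiM : i ∈ M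
        · exact hMsub hiM
        · by_cases hiJ : i ∈ Jᶜ
          · exact hiJ
          · have := h i
            simp only [hT, if_neg hiM, if_neg hiJ, Finset.mem_singleton] at this
            exact absurd this hvi
      · intro i hiM
        have := h i
        simpa [hT, show i ∈ M from hiM] using this
  -- the character is primitive
  have hprim : AddChar.IsPrimitive χ := AddChar.IsPrimitive.of_ne_one (AddChar.ne_one_iff.2 hχ)
  have key : ∀ c : F, ∑ t : F, χ (c * t) = if c = 0 then (Fintype.card F : ℂ) else 0 := by
    intro c
    have h := AddChar.sum_mulShift (ψ := χ) c hprim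
    simp_rw [mul_comm c]
    rw [h]
    split_ifs <;> simp
  -- value of each factor
  have hTfactor : ∀ i, (∑ t ∈ T i, χ (u i * t)) =
      if i ∈ M then ((if u i = 0 then (Fintype.card F : ℂ) else 0) - 1)
      else if i ∈ Jᶜ then (if u i = 0 then (Fintype.card F : ℂ) else 0) else 1 := by
    intro i
    by_cases hiM : i ∈ M
    · rw [if_pos hiM]
      have hTi : T i = ({0} : Finset F)ᶜ := by rw [hT]; simp [hiM]
      rw [hTi]
      have hadd := Finset.sum_compl_add_sum ({0} : Finset F) (fun t => χ (u i * t))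
      rw [Finset.sum_singleton] at hadd
      have h0 : χ (u i * 0) = 1 := by simp
      rw [h0] at hadd
      rw [eq_sub_of_add_eq hadd, key (u i)]
    · rw [if_neg hiM]
      by_cases hiJ : i ∈ Jᶜ
      · rw [if_pos hiJ]
        have hTi : T i = (Finset.univ : Finset F) := by rw [hT]; simp [hiM, hiJ]
        rw [hTi, key (u i)]
      · rw [if_neg hiJ]
        have hTi : T i = ({0} : Finset F) := by rw [hT]; simp [hiM, hiJ]
        rw [hTi, Finset.sum_singleton]
        simp
  -- rewrite the character sum as a product
  have hmain : ∑ v ∈ sphD F le J, χ (dot u v) = ∏ i, ∑ t ∈ T i, χ (u i * t) := by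
    rw [hsphD]
    have hχsum : ∀ v : Fin n → F, χ (dot u v) = ∏ i, χ (u i * v i) := fun v =>
      addChar_map_sum χ Finset.univ (fun i => u i * v i)
    simp_rw [hχsum]
    rw [Finset.prod_univ_sum]
  -- facts about u
  have hI_eq : idealCl le (supp u) = I := by simpa [sph] using hu
  have hsuppI : supp u ⊆ I := by
    intro a ha
    rw [← hI_eq]
    exact subset_idealCl' le (supp u) ha
  constructor
  · -- nonzero case
    intro h0
    have hIJmax : ∀ i, i ∈ I → i ∈ Jᶜ → i ∈ maxSet le I := by
      intro i hiI hiJ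
      by_contra hnm
      have : i ∈ (I \ maxSet le I) ∩ Jᶜ :=
        Finset.mem_inter.2 ⟨Finset.mem_sdiff.2 ⟨hiI, hnm⟩, hiJ⟩
      rw [h0] at this
      exact absurd this (Finset.notMem_empty i)
    have key1 : I ∩ Jᶜ ⊆ M := by
      intro i hi
      obtain ⟨hiI, hiJ⟩ := Finset.mem_inter.1 hi
      refine Finset.mem_filter.2 ⟨hiJ, ?_⟩
      intro b hbJ hbi
      have hbI : b ∈ I := hI i hiI b hbi
      have hbmax := hIJmax b hbI hbJ
      exact ((Finset.mem_filter.1 hbmax).2 i hiI hbi).symm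
    have key2 : ∀ i ∈ M, (u i ≠ 0 ↔ i ∈ I) := by
      intro i hiM
      constructor
      · intro h
        exact hsuppI ((mem_supp_iff' u i).2 h)
      · intro hiI
        have himax := hIJmax i hiI (hMsub hiM)
        have hmem : i ∈ idealCl le (supp u) := by rw [hI_eq]; exact hiI
        simp only [idealCl, Finset.mem_filter, Finset.mem_univ, true_and] at hmem
        obtain ⟨a, hasupp, hia⟩ := hmem
        have haI : a ∈ I := hsuppI hasupp
        have hai : a = i := (Finset.mem_filter.1 himax).2 a haI hia
        rw [← hai]
        exact (mem_supp_iff' u a).1 hasupp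
    have key3 : ∀ i ∈ Jᶜ \ M, u i = 0 := by
      intro i hi
      obtain ⟨hiJ, hiM⟩ := Finset.mem_sdiff.1 hi
      by_contra hne
      have hiI : i ∈ I := hsuppI ((mem_supp_iff' u i).2 hne)
      exact hiM (key1 (Finset.mem_inter.2 ⟨hiI, hiJ⟩))
    rw [hmain, ← Finset.prod_mul_prod_compl Jᶜ]
    have hJ1 : (∏ i ∈ (Jᶜ)ᶜ, ∑ t ∈ T i, χ (u i * t)) = 1 := by
      apply Finset.prod_eq_one
      intro i hi
      rw [compl_compl] at hi
      have h1 : i ∉ Jᶜ := by simp [hi]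
      have h2 : i ∉ M := fun h => h1 (hMsub h)
      rw [hTfactor i, if_neg h2, if_neg h1]
    rw [hJ1, mul_one, ← Finset.prod_sdiff hMsub]
    have hA : (∏ i ∈ Jᶜ \ M, ∑ t ∈ T i, χ (u i * t)) =
        (Fintype.card F : ℂ) ^ (Jᶜ \ M).card := by
      rw [Finset.prod_congr rfl (fun i hi => ?_), Finset.prod_const]
      obtain ⟨hiJ, hiM⟩ := Finset.mem_sdiff.1 hi
      rw [hTfactor i, if_neg hiM, if_pos hiJ, if_pos (key3 i hi)]
    rw [hA, ← Finset.prod_sdiff key1]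
    have hB : (∏ i ∈ I ∩ Jᶜ, ∑ t ∈ T i, χ (u i * t)) = (-1 : ℂ) ^ (I ∩ Jᶜ).card := by
      rw [Finset.prod_congr rfl (fun i hi => ?_), Finset.prod_const]
      have hiM : i ∈ M := key1 hi
      have hiI : i ∈ I := (Finset.mem_inter.1 hi).1
      have hune : u i ≠ 0 := (key2 i hiM).2 hiI
      rw [hTfactor i, if_pos hiM, if_neg hune]
      ring
    have hC : (∏ i ∈ M \ (I ∩ Jᶜ), ∑ t ∈ T i, χ (u i * t)) =
        ((Fintype.card F : ℂ) - 1) ^ (M.card - (I ∩ Jᶜ).card) := by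
      rw [Finset.prod_congr rfl (fun i hi => ?_), Finset.prod_const,
        Finset.card_sdiff_of_subset key1]
      obtain ⟨hiM, hiIJ⟩ := Finset.mem_sdiff.1 hi
      have hu0 : u i = 0 := by
        by_contra hne
        exact hiIJ (Finset.mem_inter.2 ⟨(key2 i hiM).1 hne, hMsub hiM⟩)
      rw [hTfactor i, if_pos hiM, if_pos hu0]
    rw [hB, hC]
    ring
  · -- zero case
    intro hne
    obtain ⟨i, hi⟩ := Finset.nonempty_iff_ne_empty.2 hne
    have hiI : i ∈ I := (Finset.mem_sdiff.1 (Finset.mem_inter.1 hi).1).1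
    have hinm : i ∉ maxSet le I := (Finset.mem_sdiff.1 (Finset.mem_inter.1 hi).1).2
    have hiJc : i ∈ Jᶜ := (Finset.mem_inter.1 hi).2
    have hnall : ¬ ∀ b ∈ I, le i b → b = i := by
      intro hall
      exact hinm (Finset.mem_filter.2 ⟨hiI, hall⟩)
    push_neg at hnall
    obtain ⟨b, hbI, hib, hbne⟩ := hnall
    have hbmem : b ∈ idealCl le (supp u) := by rw [hI_eq]; exact hbI
    simp only [idealCl, Finset.mem_filter, Finset.mem_univ, true_and] at hbmem
    obtain ⟨c, hcsupp, hbc⟩ := hbmem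
    have hic : le i c := IsTrans.trans _ _ _ hib hbc
    have hcJc : c ∈ Jᶜ := by
      rw [Finset.mem_compl] at hiJc ⊢
      exact fun hcJ => hiJc (hJ c hcJ i hic)
    have hine : i ≠ c := by
      intro h
      subst h
      exact hbne (Std.Antisymm.antisymm _ _ hbc hib)
    have hcM : c ∉ M := by
      intro hcM
      exact hine ((Finset.mem_filter.1 hcM).2 i hiJc hic)
    have huc : u c ≠ 0 := (mem_supp_iff' u c).1 hcsupp
    have hgc : (∑ t ∈ T c, χ (u c * t)) = 0 := by
      rw [hTfactor c, if_neg hcM, if_pos hcJc, if_neg huc]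
    rw [hmain]
    exact Finset.prod_eq_zero (Finset.mem_univ c) hgc

end
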